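/- Let ω0, ω1 be positive functionals on a unital C*-algebra A with representations (π0, ψ0, K0) and (π1, ψ1, K1) respectively, and let s ∈ [0,1]. Then there exist a complex Hilbert space K, a *-homomorphism π : A → B(K), and vectors φ, φ' ∈ K such that φ represents ω0, φ' represents the convex mixture (1−s)·ω0 + s·ω1, and ‖φ − φ'‖ ≤ √s · ( sqrt(ω0(1)) + sqrt(ω1(1)) ). -/

import Mathlib

noncomputable section

universe u v w

open scoped ComplexOrder

/-- A positive (continuous linear) functional on a C*-algebra:
`ω (a⋆ a) ≥ 0` for every `a`. -/
def IsPositiveFunctional {A : Type*} [CStarAlgebra A] (ω : A →L[ℂ] ℂ) : Prop :=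
  ∀ a : A, 0 ≤ ω (star a * a)

/-- `(π, ψ, K)` is a representation of the functional `ω`: `ω a = ⟨ψ, π a ψ⟩` for all `a`. -/
def IsRepn {A : Type*} [CStarAlgebra A]
    {K : Type*} [NormedAddCommGroup K] [InnerProductSpace ℂ K] [CompleteSpace K]
    (ω : A →L[ℂ] ℂ) (π : A →⋆ₙₐ[ℂ] (K →L[ℂ] K)) (ψ : K) : Prop :=
  ∀ a : A, ω a = (inner ℂ ψ (π a ψ) : ℂ)

section Aux

variable {A : Type u} [CStarAlgebra A]
    {K₀ : Type v} [NormedAddCommGroup K₀] [InnerProductSpace ℂ K₀] [CompleteSpace K₀]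
    {K₁ : Type w} [NormedAddCommGroup K₁] [InnerProductSpace ℂ K₁] [CompleteSpace K₁]

set_option maxHeartbeats 1000000 in
/-- The direct sum of two representations, on the `L²` product. -/
def prodRepn (π₀ : A →⋆ₙₐ[ℂ] (K₀ →L[ℂ] K₀)) (π₁ : A →⋆ₙₐ[ℂ] (K₁ →L[ℂ] K₁)) :
    A →⋆ₙₐ[ℂ] (WithLp 2 (K₀ × K₁) →L[ℂ] WithLp 2 (K₀ × K₁)) where
  toFun a :=
    ((WithLp.prodContinuousLinearEquiv 2 ℂ K₀ K₁).symm : K₀ × K₁ →L[ℂ] WithLp 2 (K₀ × K₁)) ∘L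
      ((π₀ a).prodMap (π₁ a)) ∘L
      ((WithLp.prodContinuousLinearEquiv 2 ℂ K₀ K₁) : WithLp 2 (K₀ × K₁) →L[ℂ] K₀ × K₁)
  map_smul' c a := by
    ext x
    refine WithLp.ofLp_injective 2 (Prod.ext ?_ ?_) <;>
      simp [ContinuousLinearMap.coe_prodMap', WithLp.toLp_fst, WithLp.toLp_snd]
  map_zero' := by
    ext x
    refine WithLp.ofLp_injective 2 (Prod.ext ?_ ?_) <;>
      simp [ContinuousLinearMap.coe_prodMap', WithLp.toLp_fst, WithLp.toLp_snd]
  map_add' a b := by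
    ext x
    refine WithLp.ofLp_injective 2 (Prod.ext ?_ ?_) <;>
      simp [ContinuousLinearMap.coe_prodMap', WithLp.toLp_fst, WithLp.toLp_snd]
  map_mul' a b := by
    ext x
    refine WithLp.ofLp_injective 2 (Prod.ext ?_ ?_) <;>
      simp [ContinuousLinearMap.coe_prodMap', WithLp.toLp_fst, WithLp.toLp_snd]
  map_star' a := by
    rw [ContinuousLinearMap.star_eq_adjoint]
    rw [ContinuousLinearMap.eq_adjoint_iff]
    intro x y
    have h₀ : π₀ (star a) = ContinuousLinearMap.adjoint (π₀ a) := by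
      rw [← ContinuousLinearMap.star_eq_adjoint, ← map_star]
    have h₁ : π₁ (star a) = ContinuousLinearMap.adjoint (π₁ a) := by
      rw [← ContinuousLinearMap.star_eq_adjoint, ← map_star]
    simp only [ContinuousLinearMap.coe_comp', Function.comp_apply,
      ContinuousLinearMap.coe_coe, ContinuousLinearMap.coe_prodMap', Prod.map_fst, Prod.map_snd,
      WithLp.prodContinuousLinearEquiv_apply, WithLp.prodContinuousLinearEquiv_symm_apply,
      WithLp.prod_inner_apply, WithLp.toLp_fst, WithLp.toLp_snd, WithLp.ofLp_fst,
      WithLp.ofLp_snd, h₀, h₁]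
    exact congrArg₂ (· + ·) (ContinuousLinearMap.adjoint_inner_left (π₀ a) y.fst x.fst)
      (ContinuousLinearMap.adjoint_inner_left (π₁ a) y.snd x.snd)

@[simp]
theorem prodRepn_apply (π₀ : A →⋆ₙₐ[ℂ] (K₀ →L[ℂ] K₀)) (π₁ : A →⋆ₙₐ[ℂ] (K₁ →L[ℂ] K₁))
    (a : A) (x : WithLp 2 (K₀ × K₁)) :
    prodRepn π₀ π₁ a x
      = (WithLp.equiv 2 (K₀ × K₁)).symm (π₀ a x.fst, π₁ a x.snd) := rfl

theorem inner_one_apply_one (π₀ : A →⋆ₙₐ[ℂ] (K₀ →L[ℂ] K₀)) (a : A) (ψ : K₀) :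
    (inner ℂ (π₀ 1 ψ) (π₀ a (π₀ 1 ψ)) : ℂ) = inner ℂ ψ (π₀ a ψ) := by
  have hsa : π₀ 1 = ContinuousLinearMap.adjoint (π₀ 1) := by
    rw [← ContinuousLinearMap.star_eq_adjoint, ← map_star, star_one]
  have h1 : π₀ a = π₀ 1 * (π₀ a * π₀ 1) := by
    rw [← map_mul, ← map_mul, one_mul, mul_one]
  calc (inner ℂ (π₀ 1 ψ) (π₀ a (π₀ 1 ψ)) : ℂ)
      = inner ℂ ((ContinuousLinearMap.adjoint (π₀ 1)) ψ) (π₀ a (π₀ 1 ψ)) := by rw [← hsa]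
    _ = inner ℂ ψ ((π₀ 1) (π₀ a (π₀ 1 ψ))) := ContinuousLinearMap.adjoint_inner_left _ _ _
    _ = inner ℂ ψ ((π₀ 1 * (π₀ a * π₀ 1)) ψ) := rfl
    _ = inner ℂ ψ (π₀ a ψ) := by rw [← h1]

end Aux

theorem stmt18 {A : Type u} [CStarAlgebra A]
    {K₀ : Type v} [NormedAddCommGroup K₀] [InnerProductSpace ℂ K₀] [CompleteSpace K₀]
    {K₁ : Type w} [NormedAddCommGroup K₁] [InnerProductSpace ℂ K₁] [CompleteSpace K₁]
    (ω₀ ω₁ : A →L[ℂ] ℂ) (hω₀ : IsPositiveFunctional ω₀) (hω₁ : IsPositiveFunctional ω₁)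
    (π₀ : A →⋆ₙₐ[ℂ] (K₀ →L[ℂ] K₀)) (ψ₀ : K₀) (hrep₀ : IsRepn ω₀ π₀ ψ₀)
    (π₁ : A →⋆ₙₐ[ℂ] (K₁ →L[ℂ] K₁)) (ψ₁ : K₁) (hrep₁ : IsRepn ω₁ π₁ ψ₁)
    (s : ℝ) (hs0 : 0 ≤ s) (hs1 : s ≤ 1) :
    ∃ (K : Type (max v w)) (_ : NormedAddCommGroup K) (_ : InnerProductSpace ℂ K)
      (_ : CompleteSpace K) (π : A →⋆ₙₐ[ℂ] (K →L[ℂ] K)) (φ φ' : K),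
      -- `φ` represents `ω₀`
      IsRepn ω₀ π φ ∧
      -- `φ'` represents the convex mixture `(1-s)·ω₀ + s·ω₁`
      IsRepn (((1 - s : ℝ) : ℂ) • ω₀ + ((s : ℝ) : ℂ) • ω₁) π φ' ∧
      ‖φ - φ'‖ ≤ Real.sqrt s * (Real.sqrt ((ω₀ 1).re) + Real.sqrt ((ω₁ 1).re)) := by
  classical
  set φ₀ : K₀ := π₀ 1 ψ₀ with hφ₀
  set φ₁ : K₁ := π₁ 1 ψ₁ with hφ₁
  -- key inner product identities
  have key₀ : ∀ a : A, (inner ℂ φ₀ (π₀ a φ₀) : ℂ) = ω₀ a := by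
    intro a; rw [hφ₀, inner_one_apply_one, ← hrep₀]
  have key₁ : ∀ a : A, (inner ℂ φ₁ (π₁ a φ₁) : ℂ) = ω₁ a := by
    intro a; rw [hφ₁, inner_one_apply_one, ← hrep₁]
  set c : ℝ := Real.sqrt (1 - s) with hc
  set d : ℝ := Real.sqrt s with hd
  have hs1' : (0:ℝ) ≤ 1 - s := by linarith
  have hc2 : c ^ 2 = 1 - s := Real.sq_sqrt hs1'
  have hd2 : d ^ 2 = s := Real.sq_sqrt hs0
  refine ⟨WithLp 2 (K₀ × K₁), inferInstance, inferInstance, inferInstance, prodRepn π₀ π₁,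
    (WithLp.equiv 2 (K₀ × K₁)).symm (φ₀, 0),
    (WithLp.equiv 2 (K₀ × K₁)).symm ((c:ℂ) • φ₀, (d:ℂ) • φ₁), ?_, ?_, ?_⟩
  · intro a
    simp only [prodRepn_apply, WithLp.prod_inner_apply, WithLp.equiv_symm_apply,
      WithLp.toLp_fst, WithLp.toLp_snd, WithLp.ofLp_fst, WithLp.ofLp_snd, map_zero, inner_zero_left, add_zero, key₀]
  · intro a
    simp only [prodRepn_apply, WithLp.prod_inner_apply, WithLp.equiv_symm_apply,
      WithLp.toLp_fst, WithLp.toLp_snd, WithLp.ofLp_fst, WithLp.ofLp_snd, map_smul, inner_smul_left, inner_smul_right, key₀, key₁,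
      ContinuousLinearMap.add_apply, ContinuousLinearMap.coe_smul', Pi.smul_apply,
      smul_eq_mul]
    rw [Complex.conj_ofReal, Complex.conj_ofReal]
    have : ((c:ℂ) * ((c:ℂ) * ω₀ a)) = ((1 - s : ℝ) : ℂ) * ω₀ a := by
      rw [← mul_assoc, ← Complex.ofReal_mul, ← sq, hc2]
    rw [this]
    have : ((d:ℂ) * ((d:ℂ) * ω₁ a)) = ((s : ℝ) : ℂ) * ω₁ a := by
      rw [← mul_assoc, ← Complex.ofReal_mul, ← sq, hd2]
    rw [this]
  · -- norm bound
    have hφ₀norm : ‖φ₀‖ = Real.sqrt ((ω₀ 1).re) := by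
      rw [@norm_eq_sqrt_re_inner ℂ]
      have := key₀ 1
      have h1 : π₀ (1 : A) φ₀ = φ₀ := by
        rw [hφ₀]
        have := congrArg (fun T : K₀ →L[ℂ] K₀ => T ψ₀) (map_mul π₀ 1 1)
        simpa using this.symm
      rw [h1] at this
      rw [this]
      rfl
    have hφ₁norm : ‖φ₁‖ = Real.sqrt ((ω₁ 1).re) := by
      rw [@norm_eq_sqrt_re_inner ℂ]
      have := key₁ 1
      have h1 : π₁ (1 : A) φ₁ = φ₁ := by
        rw [hφ₁]
        have := congrArg (fun T : K₁ →L[ℂ] K₁ => T ψ₁) (map_mul π₁ 1 1)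
        simpa using this.symm
      rw [h1] at this
      rw [this]
      rfl
    have hsplit :
        (WithLp.equiv 2 (K₀ × K₁)).symm (φ₀, 0)
          - (WithLp.equiv 2 (K₀ × K₁)).symm ((c:ℂ) • φ₀, (d:ℂ) • φ₁)
        = (WithLp.equiv 2 (K₀ × K₁)).symm (((1 : ℂ) - (c:ℂ)) • φ₀, 0)
          + (WithLp.equiv 2 (K₀ × K₁)).symm ((0 : K₀), -((d:ℂ) • φ₁)) := by
      apply (WithLp.equiv 2 (K₀ × K₁)).injective
      ext
      · simp [sub_smul]
      · simp
    rw [hsplit]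
    refine le_trans (norm_add_le _ _) ?_
    rw [WithLp.equiv_symm_apply, WithLp.norm_toLp_fst, WithLp.norm_toLp_snd]
    rw [norm_smul, norm_neg, norm_smul]
    have hc1 : c ≤ 1 := Real.sqrt_le_one.mpr (by linarith)
    have hc0 : 0 ≤ c := Real.sqrt_nonneg _
    have hd0 : 0 ≤ d := Real.sqrt_nonneg _
    have h1c : ‖(1 : ℂ) - (c:ℂ)‖ = 1 - c := by
      rw [show (1:ℂ) - (c:ℂ) = ((1 - c : ℝ) : ℂ) by push_cast; ring]
      rw [Complex.norm_real, Real.norm_of_nonneg (by linarith)]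
    have hdn : ‖(d : ℂ)‖ = d := by
      rw [Complex.norm_real, Real.norm_of_nonneg hd0]
    rw [h1c, hdn]
    have h1cd : 1 - c ≤ d := by
      have h1 : 1 - s ≤ c := by
        rw [hc]
        nlinarith [Real.sq_sqrt hs1', Real.sqrt_nonneg (1 - s)]
      have h2 : s ≤ d := by
        rw [hd]
        nlinarith [Real.sq_sqrt hs0, Real.sqrt_nonneg s]
      linarith
    have hφ₀0 : 0 ≤ ‖φ₀‖ := norm_nonneg _
    have hφ₁0 : 0 ≤ ‖φ₁‖ := norm_nonneg _
    calc (1 - c) * ‖φ₀‖ + d * ‖φ₁‖ ≤ d * ‖φ₀‖ + d * ‖φ₁‖ := by nlinarith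
    _ = Real.sqrt s * (Real.sqrt ((ω₀ 1).re) + Real.sqrt ((ω₁ 1).re)) := by
        rw [hφ₀norm, hφ₁norm, hd]; ring
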